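/- A rational function h ∈ ℝ(t) satisfies h(x) ≥ 0 for every real number x at which h is defined (i.e. every x ∈ ℝ that is not a root of the denominator of h) if and only if h is a sum of two squares in ℝ(t), i.e. there exist a, b ∈ ℝ(t) with h = a² + b². -/

import Mathlib

open Polynomial Filter Topology

lemma sos_mul {R : Type*} [CommRing R] {p q a b c d : R}
    (hp : p = a^2 + b^2) (hq : q = c^2 + d^2) :
    ∃ e f : R, p * q = e^2 + f^2 :=
  ⟨a*c - b*d, a*d + b*c, by subst hp hq; ring⟩

/-- nonneg off the roots of a nonzero polynomial implies nonneg everywhere -/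
lemma nonneg_of_nonneg_off_roots (g P : Polynomial ℝ) (hg : g ≠ 0)
    (H : ∀ x, g.eval x ≠ 0 → 0 ≤ P.eval x) : ∀ x, 0 ≤ P.eval x := by
  intro x
  have hs : Set.Finite {y : ℝ | g.IsRoot y} := finite_setOf_isRoot hg
  have hmem : ({y : ℝ | g.IsRoot y} \ {x})ᶜ ∈ 𝓝 x := by
    refine ((hs.subset Set.diff_subset).isClosed.isOpen_compl).mem_nhds ?_
    simp
  have hev : ∀ᶠ y in 𝓝[≠] x, 0 ≤ P.eval y := by
    filter_upwards [nhdsWithin_le_nhds hmem, self_mem_nhdsWithin] with y hy hy'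
    refine H y fun h0 => hy ⟨h0, ?_⟩
    simpa using hy'
  have ht : Tendsto (fun y => P.eval y) (𝓝[≠] x) (𝓝 (P.eval x)) :=
    (P.continuous.tendsto x).mono_left nhdsWithin_le_nhds
  exact ge_of_tendsto ht hev

/-- if P = (X - r) * S is nonneg everywhere, S vanishes at r -/
lemma eval_factor_zero {P S : Polynomial ℝ} {r : ℝ}
    (hPS : P = (X - C r) * S) (hP : ∀ x, 0 ≤ P.eval x) : S.eval r = 0 := by
  have hc : Tendsto (fun y => S.eval y) (𝓝 r) (𝓝 (S.eval r)) := S.continuous.tendsto r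
  have h1 : S.eval r ≤ 0 := by
    refine le_of_tendsto (hc.mono_left (nhdsWithin_le_nhds (s := Set.Iio r))) ?_
    filter_upwards [self_mem_nhdsWithin] with y (hy : y < r)
    have := hP y
    rw [hPS] at this
    simp only [eval_mul, eval_sub, eval_X, eval_C] at this
    nlinarith
  have h2 : 0 ≤ S.eval r := by
    refine ge_of_tendsto (hc.mono_left (nhdsWithin_le_nhds (s := Set.Ioi r))) ?_
    filter_upwards [self_mem_nhdsWithin] with y (hy : r < y)
    have := hP y
    rw [hPS] at this
    simp only [eval_mul, eval_sub, eval_X, eval_C] at this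
    nlinarith
  linarith

lemma poly_sos_aux (n : ℕ) : ∀ (P : Polynomial ℝ), (∀ x, 0 ≤ P.eval x) → P.natDegree = n →
    ∃ A B : Polynomial ℝ, P = A^2 + B^2 := by
  induction n using Nat.strong_induction_on with
  | _ n ih =>
  intro P hP hd
  by_cases hP0 : P = 0
  · exact ⟨0, 0, by simp [hP0]⟩
  by_cases hdeg : P.natDegree = 0
  · obtain ⟨c, rfl⟩ := natDegree_eq_zero.mp hdeg
    have hc : 0 ≤ c := by simpa using hP 0
    refine ⟨C (Real.sqrt c), 0, ?_⟩
    rw [← C_pow, Real.sq_sqrt hc]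
    ring
  have hdpos : 0 < (P.map (algebraMap ℝ ℂ)).degree := by
    rw [degree_map]
    exact natDegree_pos_iff_degree_pos.mp (Nat.pos_of_ne_zero hdeg)
  obtain ⟨z, hz⟩ := Complex.exists_root hdpos
  have hz' : Polynomial.aeval z P = 0 := by
    rwa [IsRoot, eval_map, ← aeval_def] at hz
  by_cases him : z.im = 0
  · -- real root case
    have hzr : z = algebraMap ℝ ℂ z.re := by
      apply Complex.ext <;> simp [him]
    rw [hzr, aeval_algebraMap_apply] at hz'
    have hr : P.eval z.re = 0 := by
      have h2 : algebraMap ℝ ℂ (P.eval z.re) = 0 := by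
        rw [← hz']; congr 1
      exact (algebraMap ℝ ℂ).injective (by simpa using h2)
    obtain ⟨S, hS⟩ := dvd_iff_isRoot.mpr hr
    have hSr : S.eval z.re = 0 := eval_factor_zero hS hP
    obtain ⟨T, hT⟩ := dvd_iff_isRoot.mpr hSr
    have hPT : P = (X - C z.re)^2 * T := by rw [hS, hT]; ring
    have hT0 : T ≠ 0 := fun h0 => hP0 (by simp [hPT, h0])
    have hTdeg : T.natDegree + 2 = n := by
      rw [← hd, hPT, natDegree_mul (pow_ne_zero 2 (X_sub_C_ne_zero z.re)) hT0,
        natDegree_pow, natDegree_X_sub_C]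
      ring
    have hTnn : ∀ x, 0 ≤ T.eval x := by
      refine nonneg_of_nonneg_off_roots (X - C z.re) T (X_sub_C_ne_zero z.re) ?_
      intro x hx
      simp only [eval_sub, eval_X, eval_C] at hx
      have h3 := hP x
      rw [hPT] at h3
      simp only [eval_mul, eval_pow, eval_sub, eval_X, eval_C] at h3
      have hx2 : 0 < (x - z.re)^2 :=
        lt_of_le_of_ne (sq_nonneg _) (Ne.symm (pow_ne_zero 2 hx))
      nlinarith
    obtain ⟨A, B, hAB⟩ := ih T.natDegree (by omega) T hTnn rfl
    exact ⟨(X - C z.re) * A, (X - C z.re) * B, by rw [hPT, hAB]; ring⟩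
  · -- nonreal root: divide by the quadratic q
    set q : Polynomial ℝ := (X - C z.re)^2 + C (z.im^2) with hqdef
    have hqmonic : q.Monic := by
      have h1 : ((X - C z.re)^2 : Polynomial ℝ).Monic := (monic_X_sub_C z.re).pow 2
      refine h1.add_of_left ?_
      rw [degree_pow, degree_X_sub_C]
      exact lt_of_le_of_lt degree_C_le (by norm_num)
    have hqz : Polynomial.aeval z q = 0 := by
      rw [hqdef]
      simp only [map_add, map_pow, map_sub, aeval_X, aeval_C]
      have hre : (algebraMap ℝ ℂ) z.re = (z.re : ℂ) := rfl
      rw [hre]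
      have : z - (z.re : ℂ) = z.im * Complex.I := by
        simp [Complex.ext_iff]
      rw [this]
      show ((z.im : ℂ) * Complex.I) ^ 2 + (z.im : ℂ) ^ 2 = 0
      rw [mul_pow, Complex.I_sq]
      ring
    have hqdeg2 : q.degree = 2 := by
      rw [hqdef, degree_add_eq_left_of_degree_lt, degree_pow, degree_X_sub_C]
      · rfl
      · rw [degree_pow, degree_X_sub_C]
        exact lt_of_le_of_lt degree_C_le (by norm_num)
    have hqdeg : q.natDegree = 2 := natDegree_eq_of_degree_eq_some hqdeg2
    -- remainder is zero
    have hmod := modByMonic_add_div P q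
    have hdegR : (P %ₘ q).degree < q.degree := degree_modByMonic_lt P hqmonic
    have hR : P %ₘ q = C ((P %ₘ q).coeff 1) * X + C ((P %ₘ q).coeff 0) :=
      eq_X_add_C_of_degree_le_one (by rw [hqdeg2] at hdegR; exact Order.le_of_lt_succ hdegR)
    have hRz : Polynomial.aeval z (P %ₘ q) = 0 := by
      have h4 : Polynomial.aeval z (P %ₘ q) + Polynomial.aeval z q * Polynomial.aeval z (P /ₘ q)
          = Polynomial.aeval z P := by rw [← map_mul, ← map_add, hmod]
      rw [hqz, hz'] at h4
      simpa using h4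
    rw [hR] at hRz
    simp only [map_add, map_mul, aeval_X, aeval_C] at hRz
    have hRz' : ((P %ₘ q).coeff 1 : ℂ) * z + ((P %ₘ q).coeff 0 : ℂ) = 0 := hRz
    have hc1 : (P %ₘ q).coeff 1 = 0 := by
      have := congrArg Complex.im hRz'
      simp at this
      rcases this with h | h
      · exact h
      · exact absurd h him
    have hc0 : (P %ₘ q).coeff 0 = 0 := by
      have := congrArg Complex.re hRz'
      simp [hc1] at this
      exact this
    have hR0 : P %ₘ q = 0 := by rw [hR, hc1, hc0]; simp
    have hPq : P = q * (P /ₘ q) := by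
      nth_rewrite 1 [← hmod]
      rw [hR0, zero_add]
    set S := P /ₘ q with hSdef
    have hqpos : ∀ x, 0 < q.eval x := by
      intro x
      rw [hqdef]
      simp only [eval_add, eval_pow, eval_sub, eval_X, eval_C]
      have : 0 < z.im^2 := lt_of_le_of_ne (sq_nonneg _) (Ne.symm (pow_ne_zero 2 him))
      nlinarith [sq_nonneg (x - z.re)]
    have hS0 : S ≠ 0 := fun h0 => hP0 (by rw [hPq, h0, mul_zero])
    have hSnn : ∀ x, 0 ≤ S.eval x := by
      intro x
      have h5 := hP x
      rw [hPq] at h5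
      simp only [eval_mul] at h5
      nlinarith [hqpos x]
    have hSdeg : S.natDegree + 2 = n := by
      rw [← hd, hPq, natDegree_mul hqmonic.ne_zero hS0, hqdeg]
      ring
    obtain ⟨A, B, hAB⟩ := ih S.natDegree (by omega) S hSnn rfl
    have hqsos : q = (X - C z.re)^2 + (C z.im)^2 := by rw [hqdef, ← C_pow]
    obtain ⟨e, f, hef⟩ := sos_mul hqsos hAB
    exact ⟨e, f, by rw [hPq, hef]⟩

lemma ratfunc_eval_eq (p : RatFunc ℝ) (x : ℝ) :
    RatFunc.eval (RingHom.id ℝ) x p = p.num.eval x / p.denom.eval x := by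
  rfl

theorem nonneg_iff_sum_two_squares (h : RatFunc ℝ) :
    (∀ x : ℝ, h.denom.eval x ≠ 0 → 0 ≤ RatFunc.eval (RingHom.id ℝ) x h) ↔
    ∃ a b : RatFunc ℝ, h = a ^ 2 + b ^ 2 := by
  constructor
  · intro H
    have hPnn : ∀ x, 0 ≤ (h.num * h.denom).eval x := by
      intro x
      rw [eval_mul]
      by_cases hx : h.denom.eval x = 0
      · rw [hx, mul_zero]
      · have h1 := H x hx
        rw [ratfunc_eval_eq] at h1
        have h2 : h.num.eval x * h.denom.eval x
            = (h.num.eval x / h.denom.eval x) * (h.denom.eval x)^2 := by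
          field_simp
        rw [h2]
        positivity
    obtain ⟨A, B, hAB⟩ := poly_sos_aux (h.num * h.denom).natDegree _ hPnn rfl
    have hD : algebraMap (Polynomial ℝ) (RatFunc ℝ) h.denom ≠ 0 :=
      RatFunc.algebraMap_ne_zero (h.denom_ne_zero)
    refine ⟨algebraMap _ _ A / algebraMap _ _ h.denom,
            algebraMap _ _ B / algebraMap _ _ h.denom, ?_⟩
    rw [div_pow, div_pow, ← add_div, ← map_pow, ← map_pow, ← map_add, ← hAB,
      map_mul, pow_two, mul_div_mul_right _ _ hD, RatFunc.num_div_denom]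
  · rintro ⟨a, b, rfl⟩ x hx
    set g := a ^ 2 + b ^ 2 with hg
    -- polynomial identity from cross-multiplication
    have hBD : a.denom * b.denom ≠ 0 := mul_ne_zero a.denom_ne_zero b.denom_ne_zero
    have hcross : g.num * (a.denom * b.denom)^2
        = g.denom * (a.num^2 * b.denom^2 + b.num^2 * a.denom^2) := by
      apply RatFunc.algebraMap_injective ℝ
      have h1 : algebraMap (Polynomial ℝ) (RatFunc ℝ) g.num
          / algebraMap (Polynomial ℝ) (RatFunc ℝ) g.denom
          = (algebraMap (Polynomial ℝ) (RatFunc ℝ) a.num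
              / algebraMap (Polynomial ℝ) (RatFunc ℝ) a.denom)^2
          + (algebraMap (Polynomial ℝ) (RatFunc ℝ) b.num
              / algebraMap (Polynomial ℝ) (RatFunc ℝ) b.denom)^2 := by
        rw [RatFunc.num_div_denom, RatFunc.num_div_denom, RatFunc.num_div_denom]
      have hDa : algebraMap (Polynomial ℝ) (RatFunc ℝ) a.denom ≠ 0 :=
        RatFunc.algebraMap_ne_zero a.denom_ne_zero
      have hDb : algebraMap (Polynomial ℝ) (RatFunc ℝ) b.denom ≠ 0 :=
        RatFunc.algebraMap_ne_zero b.denom_ne_zero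
      have hDg : algebraMap (Polynomial ℝ) (RatFunc ℝ) g.denom ≠ 0 :=
        RatFunc.algebraMap_ne_zero g.denom_ne_zero
      have ea : algebraMap (Polynomial ℝ) (RatFunc ℝ) a.num
          = a * algebraMap (Polynomial ℝ) (RatFunc ℝ) a.denom :=
        (div_eq_iff hDa).mp (RatFunc.num_div_denom a)
      have eb : algebraMap (Polynomial ℝ) (RatFunc ℝ) b.num
          = b * algebraMap (Polynomial ℝ) (RatFunc ℝ) b.denom :=
        (div_eq_iff hDb).mp (RatFunc.num_div_denom b)
      have eg : algebraMap (Polynomial ℝ) (RatFunc ℝ) g.num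
          = g * algebraMap (Polynomial ℝ) (RatFunc ℝ) g.denom :=
        (div_eq_iff hDg).mp (RatFunc.num_div_denom g)
      simp only [map_mul, map_add, map_pow]
      rw [eg, ea, eb, hg]
      ring
    have key : ∀ y, 0 ≤ (g.num * g.denom).eval y := by
      refine nonneg_of_nonneg_off_roots (a.denom * b.denom) _ hBD ?_
      intro y hy
      have hpos : 0 < ((a.denom * b.denom).eval y)^2 :=
        lt_of_le_of_ne (sq_nonneg _) (Ne.symm (pow_ne_zero 2 hy))
      have h2 := congrArg (Polynomial.eval y) hcross
      simp only [eval_mul, eval_add, eval_pow] at h2 hpos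
      have h4 : g.num.eval y * g.denom.eval y * (a.denom.eval y * b.denom.eval y)^2
          = (g.denom.eval y * a.num.eval y * b.denom.eval y)^2
            + (g.denom.eval y * b.num.eval y * a.denom.eval y)^2 := by
        linear_combination (g.denom.eval y) * h2
      rw [eval_mul]
      nlinarith [sq_nonneg (g.denom.eval y * a.num.eval y * b.denom.eval y),
        sq_nonneg (g.denom.eval y * b.num.eval y * a.denom.eval y), hpos, h4]
    rw [ratfunc_eval_eq]
    have h3 : g.num.eval x / g.denom.eval x
        = (g.num.eval x * g.denom.eval x) / (g.denom.eval x)^2 := by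
      field_simp
    rw [h3]
    have := key x
    rw [eval_mul] at this
    positivity
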